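/- Let a, m̂ ∈ ℝ and set m = m̂/√(1+a²), Z̃ = (0,a) ∈ ℝ², and Z = (0, a, −1)/√(1+a²) ∈ S_SH. Suppose q̃ = (x̃,ỹ) : I → ℝ² \ {Z̃} is a C² curve satisfying the planar Kepler equation d²q̃/dt² = −m · ‖q̃ − Z̃‖_a^{−3} · (q̃ − Z̃). Let τ ↦ t(τ) solve dt/dτ = x̃(t)² + ỹ(t)² + 1 and set q(τ) := π(q̃(t(τ))). Then for every τ, the tangential part of the second derivative satisfies q''(τ) − ⟨q''(τ), q(τ)⟩ q(τ) = m̂ · (1 − ⟨q(τ),Z⟩²)^{−3/2} · (Z − ⟨q(τ),Z⟩ q(τ)); i.e., the central projection carries solutions of the planar Kepler problem with norm ‖·‖_a and mass m = m̂/√(1+a²) to solutions of the spherical Kepler problem with force function m̂ cot θ_Z on the southern hemisphere. -/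

import Mathlib

noncomputable section

/-- The affine norm `‖(x,y)‖ₐ = √(x² + y²/(1+a²))` on the plane. -/
def normA (a : ℝ) (p : ℝ × ℝ) : ℝ := Real.sqrt (p.1 ^ 2 + p.2 ^ 2 / (1 + a ^ 2))

/-- Central projection from the plane `{z = -1}` (identified with `ℝ²`) onto the
open southern hemisphere of the unit sphere in `ℝ³`. -/
def centralProj (p : ℝ × ℝ) : ℝ × ℝ × ℝ :=
  (Real.sqrt (p.1 ^ 2 + p.2 ^ 2 + 1))⁻¹ • (p.1, p.2, (-1 : ℝ))

/-- The Euclidean dot product on `ℝ³ = ℝ × ℝ × ℝ`. -/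
def dot3 (u v : ℝ × ℝ × ℝ) : ℝ := u.1 * v.1 + u.2.1 * v.2.1 + u.2.2 * v.2.2

namespace KP

def Vv (qt : ℝ → ℝ × ℝ) (s : ℝ) : ℝ × ℝ × ℝ := ((qt s).1, (qt s).2, (-1:ℝ))
def Ff (qt : ℝ → ℝ × ℝ) (s : ℝ) : ℝ := (qt s).1 ^ 2 + (qt s).2 ^ 2 + 1
def Rr (qt : ℝ → ℝ × ℝ) (s : ℝ) : ℝ := Real.sqrt (Ff qt s)
def Rv (qt : ℝ → ℝ × ℝ) (s : ℝ) : ℝ :=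
  ((qt s).1 * (deriv qt s).1 + (qt s).2 * (deriv qt s).2) / Rr qt s
def Ww (qt : ℝ → ℝ × ℝ) (s : ℝ) : ℝ × ℝ × ℝ := ((deriv qt s).1, (deriv qt s).2, (0:ℝ))
def Gg (qt : ℝ → ℝ × ℝ) (s : ℝ) : ℝ × ℝ × ℝ := Rr qt s • Ww qt s - Rv qt s • Vv qt s

lemma tangential (Fq Rq D X Y w1 w2 w3 : ℝ) (hR : Rq ≠ 0) (hR2 : Rq ^ 2 = Fq)
    (hF : Fq = X ^ 2 + Y ^ 2 + 1) :
    Fq • (Rq • ((w1 : ℝ), w2, w3) - D • ((X : ℝ), Y, (-1:ℝ)))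
      - dot3 (Fq • (Rq • ((w1 : ℝ), w2, w3) - D • ((X : ℝ), Y, (-1:ℝ))))
          (Rq⁻¹ • ((X : ℝ), Y, (-1:ℝ))) • (Rq⁻¹ • ((X : ℝ), Y, (-1:ℝ)))
    = (Fq * Rq) • ((w1 : ℝ), w2, w3)
      - (Rq * (w1 * X + w2 * Y + w3 * (-1))) • ((X : ℝ), Y, (-1:ℝ)) := by
  simp only [dot3, Prod.smul_mk, smul_eq_mul, Prod.mk_sub_mk, Prod.mk.injEq]
  refine ⟨?_, ?_, ?_⟩
  · field_simp
    linear_combination (Rq*X*(w1*X+w2*Y-w3) - Fq*D*X) * hR2 - Fq*D*X * hF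
  · field_simp
    linear_combination (Rq*Y*(w1*X+w2*Y-w3) - Fq*D*Y) * hR2 - Fq*D*Y * hF
  · field_simp
    linear_combination (Rq*(w3-w2*Y-w1*X) + Fq*D) * hR2 + Fq*D * hF

end KP


open KP

/-- The central projection carries solutions of the planar Kepler problem with
norm `‖·‖ₐ` and mass `m = m̂/√(1+a²)` to solutions of the spherical Kepler problem
with force function `m̂ cot θ_Z` on the southern hemisphere. -/
theorem kepler_central_projection_sphere
    (a mhat m : ℝ) (hm : m = mhat / Real.sqrt (1 + a ^ 2))
    (Zt : ℝ × ℝ) (hZt : Zt = (0, a))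
    (Z : ℝ × ℝ × ℝ) (hZ : Z = (Real.sqrt (1 + a ^ 2))⁻¹ • ((0 : ℝ), a, (-1 : ℝ)))
    (qt : ℝ → ℝ × ℝ) (hne : ∀ s, qt s ≠ Zt) (hC2 : ContDiff ℝ 2 qt)
    (hODE : ∀ s, deriv (deriv qt) s
        = -(m / (normA a (qt s - Zt)) ^ 3) • (qt s - Zt))
    (t : ℝ → ℝ)
    (ht : ∀ τ, HasDerivAt t ((qt (t τ)).1 ^ 2 + (qt (t τ)).2 ^ 2 + 1) τ)
    (q : ℝ → ℝ × ℝ × ℝ) (hq : q = fun τ => centralProj (qt (t τ))) :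
    ∀ τ, deriv (deriv q) τ - dot3 (deriv (deriv q) τ) (q τ) • q τ
      = (mhat * (1 - dot3 (q τ) Z ^ 2) ^ (-(3 : ℝ) / 2)) •
          (Z - dot3 (q τ) Z • q τ) := by
  -- basic differentiability
  have hd1 : Differentiable ℝ qt := hC2.differentiable (by norm_num)
  have hd2 : Differentiable ℝ (deriv qt) := by
    have h2 : ContDiff ℝ ((1:ℕ∞)+1) qt := by exact_mod_cast hC2
    exact ((contDiff_succ_iff_deriv.mp h2).2.2).differentiable (by norm_num)
  have hx : ∀ s, HasDerivAt (fun u => (qt u).1) ((deriv qt s).1) s := fun s => by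
    simpa using ((hd1 s).hasDerivAt.hasFDerivAt.fst).hasDerivAt
  have hy : ∀ s, HasDerivAt (fun u => (qt u).2) ((deriv qt s).2) s := fun s => by
    simpa using ((hd1 s).hasDerivAt.hasFDerivAt.snd).hasDerivAt
  have hx' : ∀ s, HasDerivAt (fun u => (deriv qt u).1) ((deriv (deriv qt) s).1) s := fun s => by
    simpa using ((hd2 s).hasDerivAt.hasFDerivAt.fst).hasDerivAt
  have hy' : ∀ s, HasDerivAt (fun u => (deriv qt u).2) ((deriv (deriv qt) s).2) s := fun s => by
    simpa using ((hd2 s).hasDerivAt.hasFDerivAt.snd).hasDerivAt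
  have hfpos : ∀ s, 0 < Ff qt s := fun s => by unfold Ff; positivity
  have hrpos : ∀ s, 0 < Rr qt s := fun s => Real.sqrt_pos.mpr (hfpos s)
  have hr2 : ∀ s, Rr qt s ^ 2 = Ff qt s := fun s => Real.sq_sqrt (hfpos s).le
  have hf : ∀ s, HasDerivAt (Ff qt)
      (2*(qt s).1*(deriv qt s).1 + 2*(qt s).2*(deriv qt s).2) s := fun s => by
    have h := (((hx s).pow 2).add ((hy s).pow 2)).add_const 1
    exact h.congr_deriv (by ring)
  have hr : ∀ s, HasDerivAt (Rr qt) (Rv qt s) s := fun s => by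
    have h := (hf s).sqrt (hfpos s).ne'
    refine h.congr_deriv ?_
    symm
    have h0 : Real.sqrt (Ff qt s) ≠ 0 := ne_of_gt (hrpos s)
    unfold Rv Rr
    rw [div_eq_div_iff h0 (by positivity)]
    ring
  have hv : ∀ s, HasDerivAt (Vv qt) (Ww qt s) s := fun s =>
    HasDerivAt.prodMk (hx s) (HasDerivAt.prodMk (hy s) (hasDerivAt_const s (-1)))
  -- first derivative of q
  have hq1 : ∀ τ, HasDerivAt q (Gg qt (t τ)) τ := fun τ => by
    have hΦ : HasDerivAt (fun u => centralProj (qt u))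
        ((Rr qt (t τ))⁻¹ • Ww qt (t τ) + (-(Rv qt (t τ)) / Rr qt (t τ) ^ 2) • Vv qt (t τ))
        (t τ) := by
      exact ((hr (t τ)).inv (hrpos (t τ)).ne').smul (hv (t τ))
    have h2 := hΦ.scomp τ (ht τ)
    rw [hq]
    refine h2.congr_deriv ?_
    symm
    have hfr : (qt (t τ)).1 ^ 2 + (qt (t τ)).2 ^ 2 + 1 = Rr qt (t τ) * Rr qt (t τ) := by
      rw [show Rr qt (t τ) * Rr qt (t τ) = Rr qt (t τ) ^ 2 by ring, hr2]; rfl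
    rw [smul_add, smul_smul, smul_smul, hfr]
    have e1 : Rr qt (t τ) * Rr qt (t τ) * (Rr qt (t τ))⁻¹ = Rr qt (t τ) := by
      field_simp
    have e2 : Rr qt (t τ) * Rr qt (t τ) * (-(Rv qt (t τ)) / Rr qt (t τ) ^ 2) = -(Rv qt (t τ)) := by
      field_simp [(hrpos (t τ)).ne']
    rw [e1, e2, neg_smul, ← sub_eq_add_neg]
    rfl
  have hderivq : deriv q = fun τ => Gg qt (t τ) := funext fun τ => (hq1 τ).deriv
  -- now fix τ and compute the second derivative
  intro τ
  obtain ⟨D, hD⟩ : ∃ D, HasDerivAt (Rv qt) D (t τ) :=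
    ⟨_, (((hx (t τ)).mul (hx' (t τ))).add ((hy (t τ)).mul (hy' (t τ)))).div
      (hr (t τ)) (hrpos (t τ)).ne'⟩
  have hw : HasDerivAt (Ww qt)
      ((deriv (deriv qt) (t τ)).1, (deriv (deriv qt) (t τ)).2, (0:ℝ)) (t τ) :=
    HasDerivAt.prodMk (hx' (t τ)) (HasDerivAt.prodMk (hy' (t τ)) (hasDerivAt_const _ 0))
  have hG : HasDerivAt (Gg qt)
      ((Rr qt (t τ) • ((deriv (deriv qt) (t τ)).1, (deriv (deriv qt) (t τ)).2, (0:ℝ))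
          + Rv qt (t τ) • Ww qt (t τ))
        - (Rv qt (t τ) • Ww qt (t τ) + D • Vv qt (t τ))) (t τ) :=
    ((hr (t τ)).smul hw).sub (hD.smul (hv (t τ)))
  have hq2 : HasDerivAt (deriv q)
      (Ff qt (t τ) • (Rr qt (t τ) • ((deriv (deriv qt) (t τ)).1, (deriv (deriv qt) (t τ)).2, (0:ℝ))
        - D • Vv qt (t τ))) τ := by
    rw [hderivq]
    have h2 := hG.scomp τ (ht τ)
    refine h2.congr_deriv ?_
    symm
    show _ = Ff qt (t τ) • _
    congr 1
    abel
  have hq2d : deriv (deriv q) τ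
      = Ff qt (t τ) • (Rr qt (t τ) • ((deriv (deriv qt) (t τ)).1, (deriv (deriv qt) (t τ)).2, (0:ℝ))
        - D • Vv qt (t τ)) := hq2.deriv
  have hqτ : q τ = (Rr qt (t τ))⁻¹ • Vv qt (t τ) := by rw [hq]; rfl
  -- rewrite the second derivative of qt via the ODE
  have hA := hODE (t τ)
  rw [hZt] at hA
  have hAc : ((deriv (deriv qt) (t τ)).1, (deriv (deriv qt) (t τ)).2, (0:ℝ))
      = (-(m / (normA a (qt (t τ) - (0, a))) ^ 3) * ((qt (t τ)).1 - 0),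
         -(m / (normA a (qt (t τ) - (0, a))) ^ 3) * ((qt (t τ)).2 - a), (0:ℝ)) := by
    rw [hA]; rfl
  rw [hq2d, hqτ, hAc, hZ]
  simp only [Vv, Ff, Rr, normA, Prod.fst_sub, Prod.snd_sub, sub_zero]
  rw [hm]
  have hXYne : (qt (t τ)).1 ≠ 0 ∨ (qt (t τ)).2 ≠ a := by
    have h := hne (t τ); rw [hZt] at h
    by_contra hc; push_neg at hc
    exact h (Prod.ext hc.1 hc.2)
  clear hq2d hqτ hA hAc hq2 hG hw hD hderivq hq1 hv hr hf hr2 hrpos hfpos hx hy hx' hy' hd1 hd2 ht hODE hne hC2 hq hm hZ hZt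
  generalize (qt (t τ)).1 = X at hXYne ⊢
  generalize (qt (t τ)).2 = Y at hXYne ⊢
  have h1a : (0:ℝ) < 1 + a ^ 2 := by positivity
  set P := Real.sqrt (1 + a ^ 2) with hPdef
  have hPpos : 0 < P := Real.sqrt_pos.mpr h1a
  have hP2 : P ^ 2 = 1 + a ^ 2 := Real.sq_sqrt h1a.le
  set R := Real.sqrt (X ^ 2 + Y ^ 2 + 1) with hRdef
  have hRpos : 0 < R := Real.sqrt_pos.mpr (by positivity)
  have hR2 : R ^ 2 = X ^ 2 + Y ^ 2 + 1 := Real.sq_sqrt (by positivity)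
  have hNpos0 : 0 < X ^ 2 + (Y - a) ^ 2 / (1 + a ^ 2) := by
    rcases hXYne with h | h
    · have h1 : 0 < X ^ 2 := lt_of_le_of_ne (sq_nonneg X) (Ne.symm (pow_ne_zero 2 h))
      have h2 : 0 ≤ (Y - a) ^ 2 / (1 + a ^ 2) := by positivity
      linarith
    · have h0 : Y - a ≠ 0 := sub_ne_zero.mpr h
      have h1 : 0 < (Y - a) ^ 2 / (1 + a ^ 2) := by positivity
      have h2 : 0 ≤ X ^ 2 := sq_nonneg X
      linarith
  set N := Real.sqrt (X ^ 2 + (Y - a) ^ 2 / (1 + a ^ 2)) with hNdef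
  have hNpos : 0 < N := Real.sqrt_pos.mpr hNpos0
  have hN2 : N ^ 2 = X ^ 2 + (Y - a) ^ 2 / (1 + a ^ 2) := Real.sq_sqrt hNpos0.le
  have hN2' : N ^ 2 * (1 + a ^ 2) = X ^ 2 * (1 + a ^ 2) + (Y - a) ^ 2 := by
    rw [hN2]; field_simp
  clear_value P R N
  clear hPdef hRdef hNdef
  rw [tangential (X ^ 2 + Y ^ 2 + 1) R D X Y (-(mhat / P / N ^ 3) * X)
    (-(mhat / P / N ^ 3) * (Y - a)) 0 hRpos.ne' hR2 rfl]
  have hc : dot3 (R⁻¹ • ((X:ℝ), Y, (-1:ℝ))) (P⁻¹ • ((0:ℝ), a, (-1:ℝ))) = (a * Y + 1) / (R * P) := by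
    simp only [dot3, Prod.smul_mk, smul_eq_mul]
    field_simp
    ring
  rw [hc]
  have h1c : 1 - ((a * Y + 1) / (R * P)) ^ 2 = (N / R) ^ 2 := by
    field_simp
    linear_combination (R^2 - N^2) * hP2 + (1 + a^2) * hR2 - hN2'
  have hpow : (1 - ((a * Y + 1) / (R * P)) ^ 2) ^ (-(3:ℝ) / 2) = R ^ 3 / N ^ 3 := by
    rw [h1c]
    rw [← Real.rpow_natCast (N / R) 2, ← Real.rpow_mul (by positivity)]
    norm_num
    rw [← inv_pow, inv_div, div_pow]
  rw [show (-3 / 2 : ℝ) = (-(3:ℝ) / 2) by norm_num, hpow]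
  simp only [dot3, Prod.smul_mk, smul_eq_mul, Prod.mk_sub_mk, Prod.mk.injEq]
  refine ⟨?_, ?_, ?_⟩
  · field_simp
    linear_combination (0:ℝ) * hR2
  · field_simp
    linear_combination (-(mhat*a)) * hR2
  · field_simp
    linear_combination mhat * hR2
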